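/- Let S ∈ ℝ^{K×K} have nonnegative entries, let τ > 0, and let v, w ∈ ℝ^K be entrywise positive with Sw and Sᵗv entrywise positive solving the Dyson equation. Define ĥ ∈ ℝ^K by ĥ_i := √(v_i (Sw)_i) and the matrix F_r := ½ ( D(v/ĥ) S D(w/ĥ) + D(w/ĥ) Sᵗ D(v/ĥ) ), where D(u) is the diagonal matrix with the vector u on its diagonal. Then F_r is symmetric, has nonnegative entries, satisfies F_r ĥ = ĥ with ĥ entrywise positive, and every eigenvalue of F_r lies in [−1, 1]. -/

import Mathlib

open Matrix

/-- For an entrywise positive solution `(v, w)` of the Dyson equation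
(with `S` nonnegative, `τ > 0`), set `ĥ_i := √(v_i (Sw)_i)` and
`F_r := ½ (D(v/ĥ) S D(w/ĥ) + D(w/ĥ) Sᵗ D(v/ĥ))`. Then `F_r` is symmetric with nonnegative
entries, `ĥ` is entrywise positive with `F_r ĥ = ĥ`, and every eigenvalue of `F_r` lies in
`[−1, 1]`. -/
theorem stmt_18 (K : ℕ) (hK : 1 ≤ K) (S : Matrix (Fin K) (Fin K) ℝ)
    (hS : ∀ i j, 0 ≤ S i j) (τ : ℝ) (hτ : 0 < τ)
    (v w : Fin K → ℝ) (hv : ∀ i, 0 < v i) (hw : ∀ i, 0 < w i)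
    (hSw : ∀ i, 0 < S.mulVec w i) (hStv : ∀ i, 0 < Sᵀ.mulVec v i)
    (heq1 : ∀ i, 1 / v i = S.mulVec w i + τ / Sᵀ.mulVec v i)
    (heq2 : ∀ i, 1 / w i = Sᵀ.mulVec v i + τ / S.mulVec w i) :
    let h : Fin K → ℝ := fun i => Real.sqrt (v i * S.mulVec w i)
    let F : Matrix (Fin K) (Fin K) ℝ :=
      (1 / 2 : ℝ) • (Matrix.diagonal (fun i => v i / h i) * S
          * Matrix.diagonal (fun i => w i / h i)
        + Matrix.diagonal (fun i => w i / h i) * Sᵀ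
          * Matrix.diagonal (fun i => v i / h i))
    F.IsSymm ∧ (∀ i j, 0 ≤ F i j) ∧ (∀ i, 0 < h i) ∧ F.mulVec h = h ∧
    ∀ (μ : ℝ) (x : Fin K → ℝ), x ≠ 0 → F.mulVec x = μ • x → -1 ≤ μ ∧ μ ≤ 1 := by
  intro h F
  -- positivity of h
  have hh : ∀ i, 0 < h i := fun i => Real.sqrt_pos.mpr (mul_pos (hv i) (hSw i))
  have hhsq : ∀ i, h i ^ 2 = v i * S.mulVec w i := fun i => by
    simpa [h] using Real.sq_sqrt (mul_pos (hv i) (hSw i)).le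
  have hhne : ∀ i, h i ≠ 0 := fun i => (hh i).ne'
  -- key balance identity: v i * (Sw) i = w i * (Sᵀv) i
  have hbal : ∀ i, v i * S.mulVec w i = w i * Sᵀ.mulVec v i := by
    intro i
    set A := S.mulVec w i with hA
    set B := Sᵀ.mulVec v i with hB
    have e1 : 1 / v i = A + τ / B := heq1 i
    have e2 : 1 / w i = B + τ / A := heq2 i
    have hA0 := hSw i
    have hB0 := hStv i
    have e1' : B = v i * A * B + τ * v i := by
      field_simp [(hv i).ne', hB0.ne'] at e1
      have hBne : B ≠ 0 := hB0.ne'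
      have kB : v i * (τ / B) * B = v i * τ := by rw [mul_assoc, div_mul_cancel₀ _ hBne]
      linear_combination B * e1 + kB
    have e2' : A = w i * A * B + τ * w i := by
      field_simp [(hw i).ne', hA0.ne'] at e2
      have hAne : A ≠ 0 := hA0.ne'
      have kA : w i * (τ / A) * A = w i * τ := by rw [mul_assoc, div_mul_cancel₀ _ hAne]
      linear_combination A * e2 + kA
    have key : (v i * A - w i * B) * (A * B + τ) = 0 := by nlinarith [e1', e2']
    have hpos : A * B + τ > 0 := by positivity
    rcases mul_eq_zero.mp key with h0 | h0
    · linarith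
    · exact absurd h0 hpos.ne'
  -- entrywise formula for F
  have hF : ∀ i j, F i j
      = 1 / 2 * (v i / h i * S i j * (w j / h j) + w i / h i * S j i * (v j / h j)) := by
    intro i j
    simp [F, Matrix.mul_apply, Matrix.diagonal, Finset.sum_ite_eq, Finset.sum_ite_eq',
      Matrix.smul_apply, Matrix.add_apply, Matrix.transpose_apply, Matrix.mul_diagonal,
      Matrix.diagonal_mul]
    ring
  have hFsymm : F.IsSymm := by
    ext i j
    rw [Matrix.transpose_apply, hF i j, hF j i]
    ring
  have hFnn : ∀ i j, 0 ≤ F i j := by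
    intro i j
    rw [hF i j]
    have := hS i j; have := hS j i
    have := (hv i).le; have := (hv j).le; have := (hw i).le; have := (hw j).le
    have := (hh i).le; have := (hh j).le
    positivity
  have hFh : F.mulVec h = h := by
    funext i
    have hdef : F.mulVec h i = ∑ j, F i j * h j := rfl
    have step : ∀ j, F i j * h j
        = 1 / 2 * (v i / h i) * (S i j * w j) + 1 / 2 * (w i / h i) * (S j i * v j) := by
      intro j
      rw [hF i j]
      field_simp [hhne i, hhne j]
    have hsum : F.mulVec h i
        = 1 / 2 * (v i / h i) * (∑ j, S i j * w j) + 1 / 2 * (w i / h i) * (∑ j, S j i * v j) := by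
      rw [hdef, Finset.sum_congr rfl fun j _ => step j, Finset.sum_add_distrib,
        ← Finset.mul_sum, ← Finset.mul_sum]
    have hSwi : ∑ j, S i j * w j = S.mulVec w i := rfl
    have hStvi : ∑ j, S j i * v j = Sᵀ.mulVec v i := by
      simp [Matrix.mulVec, dotProduct, Matrix.transpose_apply]
    rw [hsum, hSwi, hStvi]
    have h2 : v i * S.mulVec w i + w i * Sᵀ.mulVec v i = 2 * h i ^ 2 := by
      rw [hhsq i, ← hbal i]; ring
    field_simp [hhne i]
    linear_combination h2
  refine ⟨hFsymm, hFnn, hh, hFh, ?_⟩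
  intro μ x hx hFx
  -- pick index maximizing |x j| / h j
  obtain ⟨i₀, -, hi₀⟩ := Finset.exists_max_image Finset.univ (fun j => |x j| / h j)
    ⟨⟨0, hK⟩, Finset.mem_univ _⟩
  set c := |x i₀| / h i₀ with hc
  have hcmax : ∀ j, |x j| ≤ c * h j := by
    intro j
    have hle := hi₀ j (Finset.mem_univ j)
    calc |x j| = |x j| / h j * h j := (div_mul_cancel₀ _ (hhne j)).symm
    _ ≤ c * h j := mul_le_mul_of_nonneg_right hle (hh j).le
  have hcpos : 0 < c := by
    obtain ⟨j, hj⟩ := Function.ne_iff.mp hx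
    have : 0 < |x j| := abs_pos.mpr hj
    have h1 := hcmax j
    nlinarith [hh j]
  have hxi₀ : |x i₀| = c * h i₀ := by rw [hc, div_mul_cancel₀ _ (hhne i₀)]
  have hbound : |μ| * |x i₀| ≤ c * h i₀ := by
    have hμx : μ * x i₀ = ∑ j, F i₀ j * x j := by
      have := congrFun hFx i₀
      simp [Matrix.mulVec, dotProduct] at this
      rw [← this]
    calc |μ| * |x i₀| = |∑ j, F i₀ j * x j| := by rw [← abs_mul, hμx]
    _ ≤ ∑ j, |F i₀ j * x j| := Finset.abs_sum_le_sum_abs _ _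
    _ ≤ ∑ j, F i₀ j * (c * h j) := by
        apply Finset.sum_le_sum
        intro j _
        rw [abs_mul, abs_of_nonneg (hFnn i₀ j)]
        exact mul_le_mul_of_nonneg_left (hcmax j) (hFnn i₀ j)
    _ = c * ∑ j, F i₀ j * h j := by rw [Finset.mul_sum]; congr 1; funext j; ring
    _ = c * h i₀ := by
        have : ∑ j, F i₀ j * h j = F.mulVec h i₀ := rfl
        rw [this, hFh]
  rw [hxi₀] at hbound
  have hμ : |μ| ≤ 1 := by
    have hpos : 0 < c * h i₀ := mul_pos hcpos (hh i₀)
    nlinarith [hbound, hpos]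
  exact ⟨neg_le_of_abs_le hμ, le_of_abs_le hμ⟩
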